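/- The spin group of Cl(2,0) is exactly the circle of rotors: an element x of Cl(2,0) belongs to Spin(2,0) if and only if there exists φ ∈ ℝ such that x = algebraMap ℝ Cl(2,0) (cos φ) + (sin φ) • (ι(e₁) * ι(e₂)). -/

import Mathlib

open scoped RealInnerProductSpace

/-- The quadratic form `Q v = ‖v‖²` on a real inner product space. -/
noncomputable def normSqQF (E : Type*) [NormedAddCommGroup E] [InnerProductSpace ℝ E] :
    QuadraticForm ℝ E where
  toFun v := ‖v‖ ^ 2
  toFun_smul a v := by
    simp only [norm_smul, mul_pow, Real.norm_eq_abs, sq_abs, smul_eq_mul]; ring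
  exists_companion' :=
    ⟨(2 : ℝ) • innerₗ E, fun x y => by
      simp [innerₗ_apply_apply, norm_add_sq_real]; ring⟩

/-- `Cl(2,0)`: the quadratic form on the Euclidean plane. -/
noncomputable def Q₂ : QuadraticForm ℝ (EuclideanSpace ℝ (Fin 2)) :=
  normSqQF (EuclideanSpace ℝ (Fin 2))

noncomputable def ι₂ : EuclideanSpace ℝ (Fin 2) →ₗ[ℝ] CliffordAlgebra Q₂ :=
  CliffordAlgebra.ι Q₂

/-- standard basis vectors of the plane -/
noncomputable def e₁ : EuclideanSpace ℝ (Fin 2) := EuclideanSpace.single 0 1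
noncomputable def e₂ : EuclideanSpace ℝ (Fin 2) := EuclideanSpace.single 1 1


lemma Q₂_apply (v : EuclideanSpace ℝ (Fin 2)) : Q₂ v = ‖v‖ ^ 2 := rfl

lemma Q₂_e₁ : Q₂ e₁ = 1 := by simp [Q₂_apply, e₁]
lemma Q₂_e₂ : Q₂ e₂ = 1 := by simp [Q₂_apply, e₂]

lemma polar_Q₂ (v w : EuclideanSpace ℝ (Fin 2)) :
    QuadraticMap.polar Q₂ v w = 2 * ⟪v, w⟫ := by
  simp only [QuadraticMap.polar, Q₂_apply]
  have := norm_add_sq_real v w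
  linarith

lemma he₁ : ι₂ e₁ * ι₂ e₁ = 1 := by
  rw [ι₂, CliffordAlgebra.ι_sq_scalar, Q₂_e₁, map_one]

lemma he₂ : ι₂ e₂ * ι₂ e₂ = 1 := by
  rw [ι₂, CliffordAlgebra.ι_sq_scalar, Q₂_e₂, map_one]

lemma hswap : ι₂ e₂ * ι₂ e₁ = -(ι₂ e₁ * ι₂ e₂) := by
  have := CliffordAlgebra.ι_mul_ι_add_swap (Q := Q₂) e₁ e₂
  rw [polar_Q₂] at this
  have h0 : ⟪e₁, e₂⟫ = (0:ℝ) := by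
    simp [e₁, e₂, EuclideanSpace.inner_single_left]
  rw [h0] at this
  simp only [mul_zero, map_zero] at this
  rw [ι₂]
  exact eq_neg_of_add_eq_zero_right this

lemma hE2 : (ι₂ e₁ * ι₂ e₂) * (ι₂ e₁ * ι₂ e₂) = -1 := by
  have h : (ι₂ e₁ * ι₂ e₂) * (ι₂ e₁ * ι₂ e₂) = ι₂ e₁ * (ι₂ e₂ * ι₂ e₁) * ι₂ e₂ := by
    simp only [mul_assoc]
  rw [h, hswap]
  simp only [mul_neg, neg_mul, ← mul_assoc]
  rw [he₁, one_mul, he₂]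

lemma rotor_mul (a b c d : ℝ) :
    (algebraMap ℝ (CliffordAlgebra Q₂) a + b • (ι₂ e₁ * ι₂ e₂)) *
      (algebraMap ℝ (CliffordAlgebra Q₂) c + d • (ι₂ e₁ * ι₂ e₂)) =
    algebraMap ℝ (CliffordAlgebra Q₂) (a * c - b * d) +
      (a * d + b * c) • (ι₂ e₁ * ι₂ e₂) := by
  simp only [Algebra.algebraMap_eq_smul_one, add_mul, mul_add, smul_mul_assoc,
    mul_smul_comm, one_mul, mul_one, smul_smul, hE2, smul_neg]
  module

lemma decomp (m : EuclideanSpace ℝ (Fin 2)) : m = m 0 • e₁ + m 1 • e₂ := by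
  ext i; fin_cases i <;> simp [e₁, e₂]

lemma ι_mul_ι (m₁ m₂ : EuclideanSpace ℝ (Fin 2)) :
    ι₂ m₁ * ι₂ m₂ = algebraMap ℝ (CliffordAlgebra Q₂) (m₁ 0 * m₂ 0 + m₁ 1 * m₂ 1) +
      (m₁ 0 * m₂ 1 - m₁ 1 * m₂ 0) • (ι₂ e₁ * ι₂ e₂) := by
  conv_lhs => rw [decomp m₁, decomp m₂]
  simp only [map_add, map_smul, add_mul, mul_add, smul_mul_assoc, mul_smul_comm, smul_smul,
    he₁, he₂, hswap, Algebra.algebraMap_eq_smul_one, smul_neg]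
  module

lemma star_rotor (a b : ℝ) :
    star (algebraMap ℝ (CliffordAlgebra Q₂) a + b • (ι₂ e₁ * ι₂ e₂)) =
      algebraMap ℝ (CliffordAlgebra Q₂) a + (-b) • (ι₂ e₁ * ι₂ e₂) := by
  rw [star_add, CliffordAlgebra.star_algebraMap, CliffordAlgebra.star_smul, star_mul]
  rw [ι₂, CliffordAlgebra.star_ι, CliffordAlgebra.star_ι, neg_mul_neg, ← ι₂]
  rw [hswap]
  module

lemma even_form {x : CliffordAlgebra Q₂} (hx : x ∈ CliffordAlgebra.evenOdd Q₂ 0) :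
    ∃ a b : ℝ, x = algebraMap ℝ (CliffordAlgebra Q₂) a + b • (ι₂ e₁ * ι₂ e₂) := by
  induction x, hx using CliffordAlgebra.even_induction with
  | algebraMap r => exact ⟨r, 0, by simp⟩
  | add x y hx hy ihx ihy =>
    obtain ⟨a, b, rfl⟩ := ihx
    obtain ⟨c, d, rfl⟩ := ihy
    exact ⟨a + c, b + d, by rw [map_add]; module⟩
  | ι_mul_ι_mul m₁ m₂ x hx ih =>
    obtain ⟨a, b, rfl⟩ := ih
    refine ⟨(m₁ 0 * m₂ 0 + m₁ 1 * m₂ 1) * a - (m₁ 0 * m₂ 1 - m₁ 1 * m₂ 0) * b,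
      (m₁ 0 * m₂ 0 + m₁ 1 * m₂ 1) * b + (m₁ 0 * m₂ 1 - m₁ 1 * m₂ 0) * a, ?_⟩
    rw [show CliffordAlgebra.ι Q₂ = ι₂ from rfl, ι_mul_ι m₁ m₂, rotor_mul]

lemma rotor_unit (a b : ℝ) (h : a ^ 2 + b ^ 2 = 1) :
    (algebraMap ℝ (CliffordAlgebra Q₂) a + b • (ι₂ e₁ * ι₂ e₂)) *
      star (algebraMap ℝ (CliffordAlgebra Q₂) a + b • (ι₂ e₁ * ι₂ e₂)) = 1 ∧
    star (algebraMap ℝ (CliffordAlgebra Q₂) a + b • (ι₂ e₁ * ι₂ e₂)) *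
      (algebraMap ℝ (CliffordAlgebra Q₂) a + b • (ι₂ e₁ * ι₂ e₂)) = 1 := by
  rw [star_rotor, rotor_mul, rotor_mul]
  have h1 : a * a - b * -b = 1 := by nlinarith
  have h1' : a * a - -b * b = 1 := by nlinarith
  have h2 : a * -b + b * a = 0 := by ring
  have h3 : a * b + -b * a = 0 := by ring
  rw [h1, h1', h2, h3, map_one, zero_smul, add_zero]
  exact ⟨rfl, rfl⟩


theorem mem_spinGroup_iff_rotor (x : CliffordAlgebra Q₂) :
    x ∈ spinGroup Q₂ ↔
      ∃ φ : ℝ, x = algebraMap ℝ (CliffordAlgebra Q₂) (Real.cos φ) +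
        Real.sin φ • (ι₂ e₁ * ι₂ e₂) := by
  constructor
  · intro hx
    have heven : x ∈ CliffordAlgebra.evenOdd Q₂ 0 := (spinGroup.mem_iff.mp hx).2
    obtain ⟨a, b, rfl⟩ := even_form heven
    have hu : _ ∈ unitary (CliffordAlgebra Q₂) := (spinGroup.mem_iff.mp hx).1.2
    have h1 := (Unitary.mem_iff.mp hu).2
    rw [star_rotor, rotor_mul] at h1
    have h2 : a * -b + b * a = 0 := by ring
    rw [h2, zero_smul, add_zero] at h1
    haveI : Invertible (2 : ℝ) := invertibleOfNonzero two_ne_zero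
    have hab : a ^ 2 + b ^ 2 = 1 := by
      have := (algebraMap ℝ (CliffordAlgebra Q₂)).injective (h1.trans (map_one _).symm)
      nlinarith
    set z : ℂ := ⟨a, b⟩ with hzdef
    have habs : ‖z‖ = 1 := by
      rw [Complex.norm_def, Complex.normSq_mk]
      rw [show a * a + b * b = 1 by nlinarith]
      exact Real.sqrt_one
    have hz : z ≠ 0 := by
      intro h; rw [h] at habs; simp at habs
    refine ⟨Complex.arg z, ?_⟩
    rw [Complex.cos_arg hz, Complex.sin_arg, habs]
    norm_num [hzdef]
  · rintro ⟨φ, rfl⟩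
    set v : EuclideanSpace ℝ (Fin 2) := Real.cos φ • e₁ + Real.sin φ • e₂ with hv
    have hv0 : v 0 = Real.cos φ := by simp [hv, e₁, e₂]
    have hv1 : v 1 = Real.sin φ := by simp [hv, e₁, e₂]
    have he₁0 : e₁ 0 = (1:ℝ) := by simp [e₁]
    have he₁1 : e₁ 1 = (0:ℝ) := by simp [e₁]
    have hvv : ι₂ v * ι₂ v = 1 := by
      rw [ι_mul_ι, hv0, hv1]
      rw [show Real.cos φ * Real.cos φ + Real.sin φ * Real.sin φ = 1 by
        nlinarith [Real.sin_sq_add_cos_sq φ]]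
      rw [show Real.cos φ * Real.sin φ - Real.sin φ * Real.cos φ = 0 by ring]
      rw [map_one, zero_smul, add_zero]
    have he₁v : ι₂ e₁ * ι₂ v =
        algebraMap ℝ (CliffordAlgebra Q₂) (Real.cos φ) + Real.sin φ • (ι₂ e₁ * ι₂ e₂) := by
      rw [ι_mul_ι, hv0, hv1, he₁0, he₁1]
      norm_num
    rw [spinGroup.mem_iff]
    constructor
    · rw [pinGroup.mem_iff]
      constructor
      · refine ⟨(⟨ι₂ e₁, ι₂ e₁, he₁, he₁⟩ : (CliffordAlgebra Q₂)ˣ) *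
          ⟨ι₂ v, ι₂ v, hvv, hvv⟩, ?_, ?_⟩
        · exact Subgroup.mul_mem _
            (Subgroup.subset_closure ⟨e₁, rfl⟩)
            (Subgroup.subset_closure ⟨v, rfl⟩)
        · show ι₂ e₁ * ι₂ v = _
          exact he₁v
      · exact Unitary.mem_iff.mpr
          ⟨(rotor_unit _ _ (by nlinarith [Real.sin_sq_add_cos_sq φ])).2,
           (rotor_unit _ _ (by nlinarith [Real.sin_sq_add_cos_sq φ])).1⟩
    · show _ ∈ CliffordAlgebra.evenOdd Q₂ 0
      exact Submodule.add_mem _ (SetLike.algebraMap_mem_graded _ _)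
        (Submodule.smul_mem _ _ (CliffordAlgebra.ι_mul_ι_mem_evenOdd_zero Q₂ e₁ e₂))
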